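/- For every set X and natural number k: X has cardinality at most ℵ_k if and only if there exists a finite-to-one function σ from the (k+2)-element subsets of X to the (k+1)-element subsets of X with σ(A) ⊆ A for every (k+2)-element subset A. -/

import Mathlib

open Cardinal Set

universe u

lemma closure_lemma {X : Type u} (f : Finset X → Set X) (hf : ∀ A, (f A).Finite)
    (Y : Set X) (c : Cardinal.{u}) (hc : ℵ₀ ≤ c) (hY : c ≤ #Y) :
    ∃ Z : Set X, Z ⊆ Y ∧ c ≤ #Z ∧ #Z ≤ c ∧ ∀ A : Finset X, ↑A ⊆ Z → f A ∩ Y ⊆ Z := by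
  classical
  obtain ⟨p, hp⟩ := Cardinal.le_mk_iff_exists_set.mp hY
  set Z0 : Set X := Subtype.val '' p with hZ0
  have hZ0Y : Z0 ⊆ Y := by rintro x ⟨y, _, rfl⟩; exact y.2
  have hZ0c : #Z0 = c := by
    rw [hZ0, Cardinal.mk_image_eq Subtype.val_injective, hp]
  set Zs : ℕ → Set X := fun n => Nat.rec Z0
    (fun _ Z => Z ∪ ((⋃ A ∈ {A : Finset X | ↑A ⊆ Z}, f A) ∩ Y)) n with hZs
  have hsucc : ∀ n, Zs (n+1) = Zs n ∪ ((⋃ A ∈ {A : Finset X | ↑A ⊆ Zs n}, f A) ∩ Y) :=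
    fun n => rfl
  have hmono : Monotone Zs := monotone_nat_of_le_succ (fun n => by
    rw [hsucc]; exact subset_union_left)
  have hZsY : ∀ n, Zs n ⊆ Y := by
    intro n; induction n with
    | zero => exact hZ0Y
    | succ n ih => rw [hsucc]; exact union_subset ih inter_subset_right
  have hZ0sub : ∀ n, Z0 ⊆ Zs n := fun n => hmono (Nat.zero_le n)
  have hcard : ∀ n, #(Zs n) ≤ c := by
    intro n; induction n with
    | zero => exact hZ0c.le
    | succ n ih =>
      rw [hsucc]
      refine (Cardinal.mk_union_le _ _).trans ?_
      have hinf : Infinite (Zs n) := by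
        rw [← Cardinal.aleph0_le_mk_iff]
        exact hc.trans (hZ0c.symm.le.trans (Cardinal.mk_le_mk_of_subset (hZ0sub n)))
      have hS : #{A : Finset X | ↑A ⊆ Zs n} ≤ c := by
        have hinj : Function.Injective
            (fun A : {A : Finset X // ↑A ⊆ Zs n} => (A.1).subtype (· ∈ Zs n)) := by
          intro A B hAB
          have hAB' : (A.1).subtype (· ∈ Zs n) = (B.1).subtype (· ∈ Zs n) := hAB
          have h1 := congrArg (Finset.map (Function.Embedding.subtype (· ∈ Zs n))) hAB'
          rw [Finset.subtype_map, Finset.subtype_map,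
            Finset.filter_true_of_mem (fun x hx => A.2 hx),
            Finset.filter_true_of_mem (fun x hx => B.2 hx)] at h1
          exact Subtype.ext h1
        calc #{A : Finset X | ↑A ⊆ Zs n} ≤ #(Finset (Zs n)) := Cardinal.mk_le_of_injective hinj
          _ = #(Zs n) := Cardinal.mk_finset_of_infinite _
          _ ≤ c := ih
      have hB : #((⋃ A ∈ {A : Finset X | ↑A ⊆ Zs n}, f A : Set X)) ≤ c := by
        refine (Cardinal.mk_biUnion_le _ _).trans ?_
        calc #{A : Finset X | ↑A ⊆ Zs n} * ⨆ A : {A : Finset X | ↑A ⊆ Zs n}, #(f A)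
            ≤ c * ℵ₀ := by
              refine mul_le_mul' hS (ciSup_le' fun A => (hf A.1).lt_aleph0.le)
          _ = c := Cardinal.mul_aleph0_eq hc
      calc #(Zs n) + #(((⋃ A ∈ {A : Finset X | ↑A ⊆ Zs n}, f A) ∩ Y : Set X))
          ≤ c + c := add_le_add ih ((Cardinal.mk_le_mk_of_subset inter_subset_left).trans hB)
        _ = c := Cardinal.add_eq_self hc
  refine ⟨⋃ n, Zs n, iUnion_subset hZsY, ?_, ?_, ?_⟩
  · exact hZ0c.symm.le.trans (Cardinal.mk_le_mk_of_subset ((hZ0sub 0).trans (subset_iUnion Zs 0)))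
  · have h := Cardinal.mk_iUnion_le_lift Zs
    simp only [Cardinal.lift_uzero, Cardinal.mk_nat, Cardinal.lift_aleph0] at h
    refine h.trans ?_
    calc ℵ₀ * ⨆ n, #(Zs n) ≤ ℵ₀ * c := by
          exact mul_le_mul' le_rfl (ciSup_le' hcard)
      _ = c := Cardinal.aleph0_mul_eq hc
  · intro A hA x hx
    obtain ⟨n, hn⟩ : ∃ n, ↑A ⊆ Zs n := by
      refine ⟨A.sup (fun x => if h : ∃ m, x ∈ Zs m then Nat.find h else 0), fun x hx => ?_⟩
      have hex : ∃ m, x ∈ Zs m := mem_iUnion.mp (hA hx)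
      have : x ∈ Zs (Nat.find hex) := Nat.find_spec hex
      refine hmono ?_ this
      have := Finset.le_sup (f := fun x => if h : ∃ m, x ∈ Zs m then Nat.find h else 0) hx
      simpa [dif_pos hex] using this
    refine mem_iUnion.mpr ⟨n+1, ?_⟩
    rw [hsucc]
    exact Or.inr ⟨mem_biUnion hn hx.1, hx.2⟩

lemma freeSet : ∀ (n : ℕ) {X : Type u} [DecidableEq X] (f : Finset X → Set X),
    (∀ A, (f A).Finite) → (∀ A, ∀ a ∈ A, a ∉ f A) →
    ∀ Y : Set X, Cardinal.aleph n ≤ #Y →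
    ∃ F : Finset X, ↑F ⊆ Y ∧ F.card = n + 1 ∧ ∀ x ∈ F, x ∉ f (F.erase x) := by
  intro n
  induction n with
  | zero =>
    intro X _ f hfin _ Y hY
    have hYinf : Y.Infinite := by
      rw [← Set.infinite_coe_iff, ← Cardinal.aleph0_le_mk_iff]
      simpa [Cardinal.aleph_zero] using hY
    obtain ⟨x, hxY, hxf⟩ : ∃ x ∈ Y, x ∉ f ∅ := by
      obtain ⟨x, hx⟩ := (hYinf.diff (hfin ∅)).nonempty
      exact ⟨x, hx.1, hx.2⟩
    refine ⟨{x}, by simpa using hxY, by simp, ?_⟩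
    intro y hy
    rw [Finset.mem_singleton] at hy
    subst hy
    simpa [Finset.erase_singleton] using hxf
  | succ n ih =>
    intro X _ f hfin hdisj Y hY
    have haleph : (Cardinal.aleph n : Cardinal.{u}) ≤ #Y := by
      refine le_trans ?_ hY
      exact (Cardinal.aleph_le_aleph.mpr (by exact_mod_cast Nat.le_succ n))
    obtain ⟨Z, hZY, hZc, hZc', hZclosed⟩ := closure_lemma f hfin Y (Cardinal.aleph n)
      (Cardinal.aleph0_le_aleph _) haleph
    obtain ⟨x, hxY, hxZ⟩ : ∃ x ∈ Y, x ∉ Z := by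
      by_contra h
      push_neg at h
      have : #Y ≤ #Z := Cardinal.mk_le_mk_of_subset h
      have hlt : (Cardinal.aleph n : Cardinal.{u}) < Cardinal.aleph (n+1 : ℕ) :=
        Cardinal.aleph_lt_aleph.mpr (by exact_mod_cast Nat.lt_succ_self n)
      exact absurd (hY.trans (this.trans hZc')) (not_le.mpr hlt)
    set g : Finset X → Set X := fun A => (f (insert x A) ∪ f A) \ ↑A with hg
    have hgfin : ∀ A, (g A).Finite := fun A => ((hfin _).union (hfin _)).diff
    have hgdisj : ∀ A, ∀ a ∈ A, a ∉ g A := by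
      intro A a ha hmem
      exact hmem.2 (by exact_mod_cast ha)
    obtain ⟨F', hF'Z, hF'card, hF'free⟩ := ih g hgfin hgdisj Z hZc
    have hxF' : x ∉ F' := fun h => hxZ (hF'Z h)
    refine ⟨insert x F', ?_, ?_, ?_⟩
    · intro y hy
      rcases Finset.mem_insert.mp (by exact_mod_cast hy) with rfl | h
      · exact hxY
      · exact hZY (hF'Z h)
    · rw [Finset.card_insert_of_notMem hxF', hF'card]
    · intro y hy
      rcases Finset.mem_insert.mp hy with rfl | hyF'
      · rw [Finset.erase_insert hxF']
        intro hxf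
        exact hxZ (hZclosed F' hF'Z ⟨hxf, hxY⟩)
      · have hyx : y ≠ x := fun h => hxF' (h ▸ hyF')
        rw [Finset.erase_insert_of_ne hyx.symm]
        intro hyf
        have hynot : y ∉ g (F'.erase y) := hF'free y hyF'
        have : y ∈ g (F'.erase y) := by
          rw [hg]
          exact ⟨Or.inl hyf, by simp⟩
        exact hynot this

lemma exists_sigma : ∀ (k : ℕ) (X : Type u) [DecidableEq X], #X ≤ Cardinal.aleph k →
    ∃ σ : Finset X → Finset X,
      (∀ A : Finset X, A.card = k + 2 → σ A ⊆ A ∧ (σ A).card = k + 1) ∧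
      ∀ B : Finset X, {A : Finset X | A.card = k + 2 ∧ σ A = B}.Finite := by
  intro k
  induction k with
  | zero =>
    intro X _ hX
    classical
    by_cases hne : Nonempty X
    case neg =>
      have : IsEmpty X := not_nonempty_iff.mp hne
      exact ⟨fun _ => ∅, fun A hA => absurd hA (by simp [Finset.eq_empty_of_isEmpty A]),
        fun B => Set.toFinite _⟩
    have : Countable X := Cardinal.mk_le_aleph0_iff.mp (by simpa [Cardinal.aleph_zero] using hX)
    obtain ⟨e, he⟩ := Countable.exists_injective_nat X
    set M : Finset X → X := fun A =>
      if h : A.Nonempty then Classical.choose (A.exists_max_image e h) else Classical.arbitrary X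
      with hMdef
    have hMspec : ∀ A : Finset X, A.Nonempty → M A ∈ A ∧ ∀ a ∈ A, e a ≤ e (M A) := by
      intro A h
      have : M A = Classical.choose (A.exists_max_image e h) := dif_pos h
      rw [this]
      obtain ⟨h1, h2⟩ := Classical.choose_spec (A.exists_max_image e h)
      exact ⟨h1, h2⟩
    refine ⟨fun A => if A.card = 0 + 2 then {M A} else ∅, ?_, ?_⟩
    · intro A hA
      simp only [if_pos hA]
      have hAne : A.Nonempty := Finset.card_pos.mp (by omega)
      exact ⟨Finset.singleton_subset_iff.mpr (hMspec A hAne).1, by simp⟩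
    · intro B
      by_cases hB : ∃ m, B = {m}
      case neg =>
        convert Set.finite_empty
        rw [Set.eq_empty_iff_forall_notMem]
        rintro A ⟨hA1, hA2⟩
        simp only [if_pos hA1] at hA2
        exact hB ⟨M A, hA2.symm⟩
      obtain ⟨m, rfl⟩ := hB
      have hfin : {a : X | e a < e m}.Finite :=
        Set.Finite.preimage (he.injOn) (Set.finite_Iio (e m))
      refine Set.Finite.subset (hfin.image (fun a => insert a {m})) ?_
      rintro A ⟨hA1, hA2⟩
      simp only [if_pos hA1] at hA2
      have hAne : A.Nonempty := Finset.card_pos.mp (by omega)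
      obtain ⟨hMmem, hMmax⟩ := hMspec A hAne
      have hMm : M A = m := by
        rwa [Finset.singleton_inj] at hA2
      rw [hMm] at hMmem hMmax
      have hcard : (A.erase m).card = 1 := by
        rw [Finset.card_erase_of_mem hMmem, hA1]
      obtain ⟨a, ha⟩ := Finset.card_eq_one.mp hcard
      have haA : a ∈ A := Finset.mem_of_mem_erase (ha ▸ Finset.mem_singleton_self a)
      have hane : a ≠ m := Finset.ne_of_mem_erase (ha ▸ Finset.mem_singleton_self a)
      refine ⟨a, ?_, ?_⟩
      · exact lt_of_le_of_ne (hMmax a haA) (fun hEq => hane (he hEq))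
      · have : A = insert m {a} := by rw [← ha, Finset.insert_erase hMmem]
        rw [this]
        exact Finset.pair_comm a m
  | succ k ih =>
    intro X _ hX
    classical
    by_cases hne : Nonempty X
    case neg =>
      have : IsEmpty X := not_nonempty_iff.mp hne
      exact ⟨fun _ => ∅, fun A hA => absurd hA (by simp [Finset.eq_empty_of_isEmpty A]),
        fun B => Set.toFinite _⟩
    obtain ⟨ρe⟩ : Nonempty (X ↪ (Cardinal.aleph ((k+1 : ℕ) : Ordinal)).ord.ToType) := by
      rw [← Cardinal.le_def, Cardinal.mk_ord_toType]
      exact hX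
    set O := (Cardinal.aleph ((k+1 : ℕ) : Ordinal)).ord.ToType with hO
    set ρ : X → O := fun x => ρe x with hρ
    have hinj : Function.Injective ρ := ρe.injective
    set S : X → Set X := fun m => {y | ρ y < ρ m} with hS
    have hScard : ∀ m, #(S m) ≤ Cardinal.aleph (k : Ordinal) := by
      intro m
      have h1 : #(S m) ≤ #(Iio (ρ m)) := by
        refine Cardinal.mk_le_of_injective (f := fun y : S m => (⟨ρ y.1, y.2⟩ : Iio (ρ m))) ?_
        intro a b hab
        exact Subtype.ext (hinj (congrArg Subtype.val hab))
      have h2 : #(Iio (ρ m)) < Cardinal.aleph ((k+1 : ℕ) : Ordinal) :=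
        Cardinal.mk_Iio_ord_toType (ρ m)
      have h3 : ((k+1 : ℕ) : Ordinal) = Order.succ (k : Ordinal) := by
        rw [Nat.cast_succ, Ordinal.add_one_eq_succ]
      have h2' : #(Iio (ρ m)) < Order.succ (Cardinal.aleph (k : Ordinal)) := by
        rw [← Cardinal.aleph_succ, ← h3]
        exact h2
      exact h1.trans (Order.lt_succ_iff.mp h2')
    have hIH : ∀ m : X, ∃ σm : Finset (S m) → Finset (S m),
        (∀ A : Finset (S m), A.card = k + 2 → σm A ⊆ A ∧ (σm A).card = k + 1) ∧
        ∀ B : Finset (S m), {A : Finset (S m) | A.card = k + 2 ∧ σm A = B}.Finite :=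
      fun m => ih (S m) (hScard m)
    choose σm hσm1 hσm2 using hIH
    set M : Finset X → X := fun A =>
      if h : A.Nonempty then Classical.choose (A.exists_max_image ρ h) else Classical.arbitrary X
      with hMdef
    have hMspec : ∀ A : Finset X, A.Nonempty → M A ∈ A ∧ ∀ a ∈ A, ρ a ≤ ρ (M A) := by
      intro A h
      have : M A = Classical.choose (A.exists_max_image ρ h) := dif_pos h
      rw [this]
      obtain ⟨h1, h2⟩ := Classical.choose_spec (A.exists_max_image ρ h)
      exact ⟨h1, h2⟩
    set body : Finset X → Finset X := fun A =>
      insert (M A) (((σm (M A)) ((A.erase (M A)).subtype (· ∈ S (M A)))).map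
        (Function.Embedding.subtype (· ∈ S (M A)))) with hbody
    have hkey : ∀ A : Finset X, A.card = k + 1 + 2 →
        (∀ y ∈ A.erase (M A), y ∈ S (M A)) ∧ M A ∈ A ∧ ∀ a ∈ A, ρ a ≤ ρ (M A) := by
      intro A h
      have hAne : A.Nonempty := Finset.card_pos.mp (by omega)
      obtain ⟨h1, h2⟩ := hMspec A hAne
      refine ⟨?_, h1, h2⟩
      intro y hy
      have hyA := Finset.mem_of_mem_erase hy
      have hyne := Finset.ne_of_mem_erase hy
      exact lt_of_le_of_ne (h2 y hyA) (fun hEq => hyne (hinj hEq))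
    have hmapA : ∀ A : Finset X, A.card = k + 1 + 2 →
        ((A.erase (M A)).subtype (· ∈ S (M A))).map (Function.Embedding.subtype (· ∈ S (M A)))
          = A.erase (M A) := fun A h => Finset.subtype_map_of_mem (hkey A h).1
    have hcardB : ∀ A : Finset X, A.card = k + 1 + 2 →
        ((A.erase (M A)).subtype (· ∈ S (M A))).card = k + 2 := by
      intro A h
      have h2 := congrArg Finset.card (hmapA A h)
      rw [Finset.card_map] at h2
      rw [h2, Finset.card_erase_of_mem (hkey A h).2.1, h]
      omega
    have hnm : ∀ A : Finset X, A.card = k + 1 + 2 →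
        M A ∉ ((σm (M A)) ((A.erase (M A)).subtype (· ∈ S (M A)))).map
          (Function.Embedding.subtype (· ∈ S (M A))) := by
      intro A h hmem
      have h2 : M A ∈ S (M A) := Finset.property_of_mem_map_subtype _ hmem
      simp only [hS, Set.mem_setOf_eq] at h2
      exact lt_irrefl _ h2
    have hsubmap : ∀ A : Finset X, A.card = k + 1 + 2 →
        ((σm (M A)) ((A.erase (M A)).subtype (· ∈ S (M A)))).map
          (Function.Embedding.subtype (· ∈ S (M A))) ⊆ A.erase (M A) := by
      intro A h
      have h1 := Finset.map_subset_map
        (f := Function.Embedding.subtype (· ∈ S (M A))) |>.mpr (hσm1 (M A) _ (hcardB A h)).1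
      exact h1.trans (le_of_eq (hmapA A h))
    refine ⟨fun A => if A.card = k + 1 + 2 then body A else ∅, ?_, ?_⟩
    · intro A hA
      simp only [if_pos hA, hbody]
      constructor
      · refine Finset.insert_subset_iff.mpr ⟨(hkey A hA).2.1, ?_⟩
        exact (hsubmap A hA).trans (Finset.erase_subset _ _)
      · rw [Finset.card_insert_of_notMem (hnm A hA), Finset.card_map,
          (hσm1 (M A) _ (hcardB A hA)).2]
    · intro B
      have hTfin : {A : Finset X | A.card = k + 1 + 2 ∧ body A = B}.Finite := by
        by_cases hTne : {A : Finset X | A.card = k + 1 + 2 ∧ body A = B}.Nonempty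
        case neg =>
          rw [Set.not_nonempty_iff_eq_empty] at hTne
          rw [hTne]
          exact Set.finite_empty
        obtain ⟨A0, hA01, hA02⟩ := hTne
        set m0 := M A0 with hm0
        have hmax : ∀ A, A.card = k + 1 + 2 → body A = B →
            (M A ∈ B ∧ ∀ b ∈ B, ρ b ≤ ρ (M A)) := by
          intro A h hbB
          constructor
          · rw [← hbB]
            simp only [hbody]
            exact Finset.mem_insert_self _ _
          · intro b hb
            rw [← hbB] at hb
            simp only [hbody] at hb
            rcases Finset.mem_insert.mp hb with rfl | hb'
            · exact le_rfl
            · have h2 : b ∈ A.erase (M A) := hsubmap A h hb'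
              exact le_of_lt ((hkey A h).1 b h2)
        have hMeq : ∀ A, A.card = k + 1 + 2 → body A = B → M A = m0 := by
          intro A h hbB
          have h1 := hmax A h hbB
          have h2 := hmax A0 hA01 hA02
          exact hinj (le_antisymm (h2.2 _ h1.1) (h1.2 _ h2.1))
        set B' : Finset (S m0) := (B.erase m0).subtype (· ∈ S m0) with hB'
        refine Set.Finite.subset (Set.Finite.image
          (fun C : Finset (S m0) => insert m0 (C.map (Function.Embedding.subtype (· ∈ S m0))))
          (hσm2 m0 B')) ?_
        intro A hA
        simp only [Set.mem_setOf_eq] at hA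
        obtain ⟨h, hbB⟩ := hA
        have hMA : M A = m0 := hMeq A h hbB
        have hmapped : ((σm (M A)) ((A.erase (M A)).subtype (· ∈ S (M A)))).map
            (Function.Embedding.subtype (· ∈ S (M A))) = B.erase (M A) := by
          rw [← hbB]
          simp only [hbody]
          rw [Finset.erase_insert (hnm A h)]
        rw [hMA] at hmapped
        have hBsub : ∀ b ∈ B.erase m0, b ∈ S m0 := by
          intro b hb
          rw [← hmapped] at hb
          exact Finset.property_of_mem_map_subtype _ hb
        have hB'map : B'.map (Function.Embedding.subtype (· ∈ S m0)) = B.erase m0 :=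
          Finset.subtype_map_of_mem hBsub
        have hCA := hmapA A h
        rw [hMA] at hCA
        have hC_mem : σm m0 ((A.erase m0).subtype (· ∈ S m0)) = B' := by
          apply Finset.map_injective (Function.Embedding.subtype (· ∈ S m0))
          rw [hmapped, hB'map]
        have hcardC := hcardB A h
        rw [hMA] at hcardC
        refine ⟨(A.erase m0).subtype (· ∈ S m0), ⟨hcardC, hC_mem⟩, ?_⟩
        show insert m0 (((A.erase m0).subtype (· ∈ S m0)).map
          (Function.Embedding.subtype (· ∈ S m0))) = A
        rw [hCA]
        exact Finset.insert_erase (hMA ▸ (hkey A h).2.1)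
      refine hTfin.subset ?_
      rintro A ⟨h1, h2⟩
      simp only [if_pos h1] at h2
      exact ⟨h1, h2⟩


theorem stmt_13 (X : Type*) (k : ℕ) :
    Cardinal.mk X ≤ Cardinal.aleph k ↔
    ∃ σ : Finset X → Finset X,
      (∀ A : Finset X, A.card = k + 2 → σ A ⊆ A ∧ (σ A).card = k + 1) ∧
      ∀ B : Finset X, {A : Finset X | A.card = k + 2 ∧ σ A = B}.Finite := by
  classical
  constructor
  · intro h
    exact exists_sigma k X h
  · rintro ⟨σ, hσ1, hσ2⟩
    by_contra hlt
    rw [not_le] at hlt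
    have hsucc : Cardinal.aleph ((k+1 : ℕ) : Ordinal) ≤ #X := by
      have h3 : ((k+1 : ℕ) : Ordinal) = Order.succ (k : Ordinal) := by
        rw [Nat.cast_succ, Ordinal.add_one_eq_succ]
      rw [h3, Cardinal.aleph_succ, Order.succ_le_iff]
      exact hlt
    set f : Finset X → Set X := fun A => {x | x ∉ A ∧ A.card = k + 1 ∧ σ (insert x A) = A}
      with hf
    have hffin : ∀ A, (f A).Finite := by
      intro A
      have himg : (fun x => insert x A) '' (f A) ⊆ {C : Finset X | C.card = k + 2 ∧ σ C = A} := by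
        rintro C ⟨x, ⟨hx1, hx2, hx3⟩, rfl⟩
        exact ⟨by rw [Finset.card_insert_of_notMem hx1, hx2], hx3⟩
      have hinj : Set.InjOn (fun x => insert x A) (f A) := by
        intro x hx y hy hxy
        have hxy' : insert x A = insert y A := hxy
        have : x ∈ insert y A := hxy' ▸ Finset.mem_insert_self x A
        rcases Finset.mem_insert.mp this with h | h
        · exact h
        · exact absurd h hx.1
      exact Set.Finite.of_finite_image ((hσ2 A).subset himg) hinj
    have hfdisj : ∀ A : Finset X, ∀ a ∈ A, a ∉ f A := by
      intro A a ha hmem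
      exact hmem.1 ha
    obtain ⟨F, _, hFcard, hFfree⟩ := freeSet (k+1) f hffin hfdisj Set.univ
      (by rw [Cardinal.mk_univ]; exact hsucc)
    obtain ⟨hσsub, hσcard⟩ := hσ1 F (by omega)
    obtain ⟨x, hxF, hxσ⟩ : ∃ x ∈ F, x ∉ σ F := by
      by_contra hcon
      push_neg at hcon
      have h1 : F ⊆ σ F := fun y hy => hcon y hy
      have h2 := Finset.card_le_card h1
      omega
    have hσF : σ F = F.erase x := by
      refine Finset.eq_of_subset_of_card_le (Finset.subset_erase.mpr ⟨hσsub, hxσ⟩) ?_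
      rw [Finset.card_erase_of_mem hxF, hσcard, hFcard]
      omega
    refine hFfree x hxF ?_
    refine ⟨Finset.notMem_erase x F, ?_, ?_⟩
    · rw [Finset.card_erase_of_mem hxF, hFcard]
      omega
    · rw [Finset.insert_erase hxF, hσF]
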